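/- (Exact form of Example 1: symmetric decomposition of the Wei–Goldbart state ρ(1/4, 3/8).) Let ω = exp(2πi/3) and ψ_k = (e₀ + ω^k e₁)/√2 ∈ ℂ² for k = 0, 1, 2. Then for all multi-indices I, J ∈ (Fin 2)³ one has (1/4)·χ_GHZ(I)·conj(χ_GHZ(J)) + (3/8)·χ_W(I)·conj(χ_W(J)) + (3/8)·χ_W̃(I)·conj(χ_W̃(J)) = (1/3)·Σ_{k=0}^{2} (Π_{t} ψ_k(I t)) · conj(Π_{t} ψ_k(J t)). In particular, the 3-qubit mixed state ρ(1/4,3/8) = (1/4)|GHZ⟩⟨GHZ| + (3/8)|W⟩⟨W| + (3/8)|W̃⟩⟨W̃| has a symmetric positive Hermitian decomposition with three terms, each of weight 1/3. -/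

import Mathlib

/-- `ω = exp(2πi/3)`. -/
noncomputable def omega3 : ℂ := Complex.exp (2 * Real.pi * Complex.I / 3)

/-- `ψ_k = (e₀ + ω^k e₁)/√2 ∈ ℂ²` for `k = 0, 1, 2`. -/
noncomputable def psiWG (k : Fin 3) : Fin 2 → ℂ :=
  fun j => if j = 0 then 1 / (Real.sqrt 2 : ℂ) else omega3 ^ (k : ℕ) / (Real.sqrt 2 : ℂ)

/-- The tensor of `|GHZ⟩`: nonzero entries `χ(0,0,0) = χ(1,1,1) = 1/√2`. -/
noncomputable def chiGHZ (I : Fin 3 → Fin 2) : ℂ :=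
  if (∑ t, (I t : ℕ)) = 0 ∨ (∑ t, (I t : ℕ)) = 3 then 1 / (Real.sqrt 2 : ℂ) else 0

/-- The tensor of `|W⟩`: nonzero entries `χ(0,0,1) = χ(0,1,0) = χ(1,0,0) = 1/√3`. -/
noncomputable def chiW (I : Fin 3 → Fin 2) : ℂ :=
  if (∑ t, (I t : ℕ)) = 1 then 1 / (Real.sqrt 3 : ℂ) else 0

/-- The tensor of `|W̃⟩`: nonzero entries `χ(1,1,0) = χ(1,0,1) = χ(0,1,1) = 1/√3`. -/
noncomputable def chiWt (I : Fin 3 → Fin 2) : ℂ :=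
  if (∑ t, (I t : ℕ)) = 2 then 1 / (Real.sqrt 3 : ℂ) else 0

lemma omega3_cube : omega3 ^ 3 = 1 := by
  unfold omega3
  rw [← Complex.exp_nat_mul]
  push_cast
  have : (3:ℂ) * (2 * Real.pi * Complex.I / 3) = 2 * Real.pi * Complex.I := by ring
  rw [this, Complex.exp_two_pi_mul_I]

lemma omega3_sum : 1 + omega3 + omega3 ^ 2 = 0 := by
  have h := omega3_cube
  have h1 : omega3 ≠ 1 := by
    unfold omega3
    intro hc
    rw [Complex.exp_eq_one_iff] at hc
    obtain ⟨n, hn⟩ := hc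
    have hre : (2 * Real.pi / 3 : ℝ) = n * (2 * Real.pi) := by
      have := congrArg Complex.im hn
      simpa [Complex.mul_im, Complex.ofReal_mul] using this
    have hpi := Real.pi_pos
    have h31 : (3 : ℝ) * n = 1 := by
      field_simp at hre
      nlinarith [hre]
    have : (3 * n : ℤ) = 1 := by exact_mod_cast h31
    omega
  have h0 : (omega3 - 1) * (1 + omega3 + omega3 ^ 2) = 0 := by
    linear_combination h
  rcases mul_eq_zero.1 h0 with h' | h'
  · exact absurd (by linear_combination h') h1
  · exact h'

lemma omega3_ne : omega3 ≠ 0 := by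
  intro h
  have h3 := omega3_cube
  rw [h] at h3; simp at h3

lemma conj_omega3 : (starRingEnd ℂ) omega3 = omega3 ^ 2 := by
  have habs : ‖omega3‖ = 1 := by
    unfold omega3
    rw [Complex.norm_exp]
    simp [Complex.div_re, Complex.mul_re]
  have h1 : omega3 * (starRingEnd ℂ) omega3 = 1 := by
    rw [Complex.mul_conj]
    rw [← Complex.sq_norm, habs]
    norm_num
  have h2 : omega3 * omega3 ^ 2 = 1 := by linear_combination omega3_cube
  exact mul_left_cancel₀ omega3_ne (h1.trans h2.symm)

lemma normSq_omega3 : Complex.normSq omega3 = 1 := by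
  have h1 : omega3 * (starRingEnd ℂ) omega3 = 1 := by
    rw [conj_omega3]; linear_combination omega3_cube
  have := Complex.mul_conj omega3
  rw [h1] at this
  exact_mod_cast this.symm

lemma psi_eq (k : Fin 3) (j : Fin 2) :
    psiWG k j = omega3 ^ ((k : ℕ) * (j : ℕ)) / (Real.sqrt 2 : ℂ) := by
  fin_cases j <;> simp [psiWG]

lemma prod_psi (k : Fin 3) (I : Fin 3 → Fin 2) :
    ∏ t, psiWG k (I t) = omega3 ^ ((k : ℕ) * ∑ t, (I t : ℕ)) / (Real.sqrt 2 : ℂ) ^ 3 := by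
  simp only [psi_eq]
  rw [Finset.prod_div_distrib]
  congr 1
  · rw [Finset.prod_pow_eq_pow_sum, ← Finset.mul_sum]
  · simp

lemma key (s s' : ℕ) (hs : s ≤ 3) (hs' : s' ≤ 3) :
    (1/4 : ℂ) * (if s = 0 ∨ s = 3 then 1/(Real.sqrt 2:ℂ) else 0) * (if s' = 0 ∨ s' = 3 then 1/(Real.sqrt 2:ℂ) else 0)
    + (3/8 : ℂ) * (if s = 1 then 1/(Real.sqrt 3:ℂ) else 0) * (if s' = 1 then 1/(Real.sqrt 3:ℂ) else 0)
    + (3/8 : ℂ) * (if s = 2 then 1/(Real.sqrt 3:ℂ) else 0) * (if s' = 2 then 1/(Real.sqrt 3:ℂ) else 0)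
    = (1/3 : ℂ) * ∑ k : Fin 3, omega3 ^ ((k:ℕ) * s) * omega3 ^ (2 * ((k:ℕ) * s')) / 8 := by
  have hmod : ∀ n : ℕ, omega3 ^ n = omega3 ^ (n % 3) := by
    intro n
    conv_lhs => rw [← Nat.div_add_mod n 3]
    rw [pow_add, pow_mul, omega3_cube, one_pow, one_mul]
  have h2i : (((Real.sqrt 2 : ℝ)) : ℂ)⁻¹ ^ 2 = 1/2 := by
    rw [← Complex.ofReal_inv, ← Complex.ofReal_pow]
    norm_num [Real.sq_sqrt]
  have h3i : (((Real.sqrt 3 : ℝ)) : ℂ)⁻¹ ^ 2 = 1/3 := by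
    rw [← Complex.ofReal_inv, ← Complex.ofReal_pow]
    norm_num [Real.sq_sqrt]
  rw [Fin.sum_univ_three]
  simp only [Fin.val_zero, Fin.val_one, Fin.val_two]
  interval_cases s <;> interval_cases s' <;>
    norm_num [h2i, h3i] <;>
    ring_nf <;>
    (try simp only [hmod 18, hmod 16, hmod 15, hmod 14, hmod 13, hmod 12, hmod 11, hmod 10,
      hmod 9, hmod 8, hmod 7, hmod 6, hmod 5, hmod 4, hmod 3, Nat.reduceMod,
      pow_zero, pow_one, one_mul]) <;>
    first
      | (norm_num; done)
      | linear_combination (1/8 : ℂ) * omega3_sum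
      | linear_combination (-1/8 : ℂ) * omega3_sum
      | linear_combination (1/4 : ℂ) * h2i
      | linear_combination (3/8 : ℂ) * h3i
      | linear_combination (3/8 : ℂ) * h3i + (1/12 : ℂ) * omega3_cube
      | linear_combination (1/4 : ℂ) * h2i + (1/12 : ℂ) * omega3_cube

/-- exact form of Example 1, symmetric decomposition of the
Wei–Goldbart state `ρ(1/4, 3/8)`: for all multi-indices `I, J ∈ (Fin 2)³`,
`(1/4)χ_GHZ(I)conj(χ_GHZ(J)) + (3/8)χ_W(I)conj(χ_W(J)) + (3/8)χ_W̃(I)conj(χ_W̃(J))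
 = (1/3)Σ_{k=0}^{2} (Π_t ψ_k(I t))·conj(Π_t ψ_k(J t))`,
and the `ψ_k` are unit vectors, so `ρ(1/4,3/8)` has a symmetric positive Hermitian
decomposition with three terms, each of weight `1/3`. -/
theorem weiGoldbart_symmetric_decomposition :
    (∀ I J : Fin 3 → Fin 2,
      (1 / 4 : ℂ) * chiGHZ I * (starRingEnd ℂ) (chiGHZ J)
        + (3 / 8 : ℂ) * chiW I * (starRingEnd ℂ) (chiW J)
        + (3 / 8 : ℂ) * chiWt I * (starRingEnd ℂ) (chiWt J)
      = (1 / 3 : ℂ) * ∑ k : Fin 3,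
          (∏ t, psiWG k (I t)) * (starRingEnd ℂ) (∏ t, psiWG k (J t))) ∧
    (∀ k : Fin 3, ∑ j, Complex.normSq (psiWG k j) = 1) := by
  constructor
  · intro I J
    have hb : ∀ (K : Fin 3 → Fin 2), ∑ t, (K t : ℕ) ≤ 3 := by
      intro K
      calc ∑ t, (K t : ℕ) ≤ ∑ _t : Fin 3, 1 :=
            Finset.sum_le_sum (fun t _ => Fin.is_le (K t))
        _ = 3 := by simp
    have hterm : ∀ k : Fin 3,
        (∏ t, psiWG k (I t)) * (starRingEnd ℂ) (∏ t, psiWG k (J t))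
        = omega3 ^ ((k:ℕ) * ∑ t, (I t : ℕ)) * omega3 ^ (2 * ((k:ℕ) * ∑ t, (J t : ℕ))) / 8 := by
      intro k
      rw [prod_psi, prod_psi, map_div₀, map_pow, conj_omega3, ← pow_mul, map_pow,
        Complex.conj_ofReal, div_mul_div_comm]
      have h8 : ((Real.sqrt 2 : ℝ) : ℂ) ^ 3 * ((Real.sqrt 2 : ℝ) : ℂ) ^ 3 = 8 := by
        rw [← pow_add, show (3 + 3 : ℕ) = 2 * 3 from rfl, pow_mul,
          ← Complex.ofReal_pow, Real.sq_sqrt (by norm_num : (2:ℝ) ≥ 0)]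
        norm_num
      rw [h8, mul_comm 2 ((k:ℕ) * ∑ t, (J t : ℕ)), pow_mul, pow_mul]
    simp only [hterm]
    have hc1 : (starRingEnd ℂ) (chiGHZ J) = chiGHZ J := by
      unfold chiGHZ; split_ifs <;> simp [Complex.conj_ofReal]
    have hc2 : (starRingEnd ℂ) (chiW J) = chiW J := by
      unfold chiW; split_ifs <;> simp [Complex.conj_ofReal]
    have hc3 : (starRingEnd ℂ) (chiWt J) = chiWt J := by
      unfold chiWt; split_ifs <;> simp [Complex.conj_ofReal]
    rw [hc1, hc2, hc3]
    simp only [chiGHZ, chiW, chiWt]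
    exact key (∑ t, (I t : ℕ)) (∑ t, (J t : ℕ)) (hb I) (hb J)
  · intro k
    rw [Fin.sum_univ_two]
    simp only [psiWG]
    norm_num [Complex.normSq_div, map_pow, normSq_omega3,
      Complex.normSq_ofReal, Real.mul_self_sqrt]
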